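/- Markov property of the trace for χ = G_n: for all 2ⁿ × 2ⁿ complex matrices A and B, Trace((A ⊗ I₂)·(I₂^{⊗(n−1)} ⊗ R_Q)·(B ⊗ I₂)) = Q·Trace(A·B), where the trace on the left is of 2^{n+1} × 2^{n+1} matrices. Equivalently, with normalized traces Tr_m = (1/2^m)·Trace, one has Tr_{n+1}((A ⊗ I₂)(I₂^{⊗(n−1)} ⊗ R_Q)(B ⊗ I₂)) = Tr_{n+1}(I₂^{⊗(n−1)} ⊗ R_Q)·Tr_{n+1}((A·B) ⊗ I₂). -/

import Mathlib

open Matrix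

noncomputable section

/-- Kronecker product of square matrices, reindexed to `Fin (a * b)`
(lexicographically: the first factor is the most significant). -/
def kron {a b : ℕ} (A : Matrix (Fin a) (Fin a) ℂ) (B : Matrix (Fin b) (Fin b) ℂ) :
    Matrix (Fin (a * b)) (Fin (a * b)) ℂ :=
  Matrix.reindex finProdFinEquiv finProdFinEquiv (Matrix.kroneckerMap (· * ·) A B)

/-- The rescaled Yang–Baxter solution
`R_Q` with rows `(Q,0,0,0), (0,0,Q⁻¹,0), (0,Q⁻¹,0,0), (0,0,0,Q)`. -/
def RQmat (Q : ℂ) : Matrix (Fin 4) (Fin 4) ℂ :=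
  !![Q, 0, 0, 0; 0, 0, Q⁻¹, 0; 0, Q⁻¹, 0, 0; 0, 0, 0, Q]

/-- `I₂^{⊗(n−1)} ⊗ M` as a `2ⁿ·2 × 2ⁿ·2` matrix.  The size condition in the `dite` holds
whenever `n ≥ 1`. -/
def bigTensor (n : ℕ) (M : Matrix (Fin 4) (Fin 4) ℂ) :
    Matrix (Fin (2 ^ n * 2)) (Fin (2 ^ n * 2)) ℂ :=
  if h : 2 ^ (n - 1) * 4 = 2 ^ n * 2 then
    Matrix.reindex (finCongr h) (finCongr h)
      (kron (1 : Matrix (Fin (2 ^ (n - 1))) (Fin (2 ^ (n - 1))) ℂ) M)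
  else 1

lemma kron_apply' {a b : ℕ} (A : Matrix (Fin a) (Fin a) ℂ) (B : Matrix (Fin b) (Fin b) ℂ)
    (x y : Fin a) (s t : Fin b) :
    kron A B (finProdFinEquiv (x, s)) (finProdFinEquiv (y, t)) = A x y * B s t := by
  simp [kron, Matrix.kroneckerMap]

lemma kron_mul' {a b : ℕ} (A C : Matrix (Fin a) (Fin a) ℂ) (B D : Matrix (Fin b) (Fin b) ℂ) :
    kron A B * kron C D = kron (A * C) (B * D) := by
  simp only [kron, Matrix.reindex_apply, Matrix.submatrix_mul_equiv]
  rw [← Matrix.mul_kronecker_mul]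

lemma trace_reindex' {m n : Type*} [Fintype m] [Fintype n] [DecidableEq m] [DecidableEq n]
    (e : m ≃ n) (M : Matrix m m ℂ) :
    Matrix.trace (Matrix.reindex e e M) = Matrix.trace M := by
  simp only [Matrix.trace, Matrix.diag, Matrix.reindex_apply, Matrix.submatrix_apply]
  exact Fintype.sum_equiv e.symm _ _ (fun i => rfl)

lemma trace_kron' {a b : ℕ} (A : Matrix (Fin a) (Fin a) ℂ) (B : Matrix (Fin b) (Fin b) ℂ) :
    Matrix.trace (kron A B) = Matrix.trace A * Matrix.trace B := by
  rw [kron, trace_reindex', Matrix.trace_kronecker]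

lemma bigTensor_eq (m : ℕ) (M : Matrix (Fin 4) (Fin 4) ℂ) :
    bigTensor (m + 1) M =
      Matrix.reindex (finCongr (show 2 ^ m * 4 = 2 ^ (m+1) * 2 by rw [pow_succ]; ring))
        (finCongr (show 2 ^ m * 4 = 2 ^ (m+1) * 2 by rw [pow_succ]; ring))
        (kron (1 : Matrix (Fin (2 ^ m)) (Fin (2 ^ m)) ℂ) M) := by
  rw [bigTensor, dif_pos (show 2 ^ (m+1-1) * 4 = 2^(m+1)*2 by
    rw [Nat.add_sub_cancel, pow_succ]; ring)]

lemma main_trace (m : ℕ) (Q : ℂ) (C : Matrix (Fin (2 ^ (m+1))) (Fin (2 ^ (m+1))) ℂ) :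
    Matrix.trace (bigTensor (m+1) (RQmat Q) * kron C (1 : Matrix (Fin 2) (Fin 2) ℂ))
      = Q * Matrix.trace C := by
  have h2 : 2 ^ m * 2 = 2 ^ (m+1) := (pow_succ 2 m).symm
  have h : 2 ^ m * 4 = 2 ^ (m+1) * 2 := by rw [pow_succ]; ring
  set G : Fin (2^m) × Fin 2 ≃ Fin (2^(m+1)) := finProdFinEquiv.trans (finCongr h2) with hG
  have hbig : bigTensor (m+1) (RQmat Q) =
      Matrix.reindex (finCongr h) (finCongr h)
        (kron (1 : Matrix (Fin (2 ^ m)) (Fin (2 ^ m)) ℂ) (RQmat Q)) := bigTensor_eq m _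
  have hidx : ∀ (x : Fin (2^m)) (a s : Fin 2),
      finProdFinEquiv (G (x,a), s) = finCongr h (finProdFinEquiv (x, finProdFinEquiv (a,s))) := by
    intro x a s
    apply Fin.ext
    simp [hG, finProdFinEquiv, finCongr]
    omega
  set E : (Fin (2^m) × Fin 2) × Fin 2 ≃ Fin (2^(m+1) * 2) :=
    (G.prodCongr (Equiv.refl (Fin 2))).trans finProdFinEquiv with hE
  have hEapp : ∀ (x : Fin (2^m)) (a s : Fin 2),
      E ((x,a),s) = finProdFinEquiv (G (x,a), s) := fun _ _ _ => rfl
  have expand : Matrix.trace (bigTensor (m+1) (RQmat Q) * kron C (1 : Matrix (Fin 2) (Fin 2) ℂ))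
      = ∑ p : ((Fin (2^m) × Fin 2) × Fin 2) × ((Fin (2^m) × Fin 2) × Fin 2),
          bigTensor (m+1) (RQmat Q) (E p.1) (E p.2) * kron C 1 (E p.2) (E p.1) := by
    rw [Matrix.trace]
    simp only [Matrix.diag, Matrix.mul_apply]
    refine Eq.symm ?_
    calc ∑ p : ((Fin (2^m) × Fin 2) × Fin 2) × ((Fin (2^m) × Fin 2) × Fin 2),
          bigTensor (m+1) (RQmat Q) (E p.1) (E p.2) * kron C 1 (E p.2) (E p.1)
        = ∑ ij : Fin (2^(m+1)*2) × Fin (2^(m+1)*2),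
            bigTensor (m+1) (RQmat Q) ij.1 ij.2 * kron C 1 ij.2 ij.1 :=
          Fintype.sum_equiv (E.prodCongr E) _ _ (fun pq => rfl)
      _ = ∑ i, ∑ j, bigTensor (m+1) (RQmat Q) i j * kron C 1 j i := Fintype.sum_prod_type _
  rw [expand]
  have term : ∀ p : ((Fin (2^m) × Fin 2) × Fin 2) × ((Fin (2^m) × Fin 2) × Fin 2),
      bigTensor (m+1) (RQmat Q) (E p.1) (E p.2) * kron C 1 (E p.2) (E p.1)
      = ((1 : Matrix (Fin (2^m)) (Fin (2^m)) ℂ) p.1.1.1 p.2.1.1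
          * RQmat Q (finProdFinEquiv (p.1.1.2, p.1.2)) (finProdFinEquiv (p.2.1.2, p.2.2)))
        * (C (G p.2.1) (G p.1.1) * (1 : Matrix (Fin 2) (Fin 2) ℂ) p.2.2 p.1.2) := by
    rintro ⟨⟨⟨y,b⟩,t⟩,⟨⟨z,c⟩,u⟩⟩
    rw [hbig, hEapp, hEapp, hidx, hidx]
    simp only [Matrix.reindex_apply, Matrix.submatrix_apply, Equiv.symm_apply_apply]
    rw [kron_apply']
    congr 1
    rw [← hidx, ← hidx, ← hEapp, ← hEapp]
    show kron C 1 (finProdFinEquiv (G (z,c), u)) (finProdFinEquiv (G (y,b), t)) = _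
    rw [kron_apply']
  simp only [term, Fintype.sum_prod_type, Fin.sum_univ_two]
  have q00 : (finProdFinEquiv ((0:Fin 2),(0:Fin 2))) = (0 : Fin 4) := rfl
  have q01 : (finProdFinEquiv ((0:Fin 2),(1:Fin 2))) = (1 : Fin 4) := rfl
  have q10 : (finProdFinEquiv ((1:Fin 2),(0:Fin 2))) = (2 : Fin 4) := rfl
  have q11 : (finProdFinEquiv ((1:Fin 2),(1:Fin 2))) = (3 : Fin 4) := rfl
  simp only [q00, q01, q10, q11]
  norm_num [RQmat, Matrix.one_apply]
  rw [Matrix.trace]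
  simp only [Matrix.diag]
  rw [← Equiv.sum_comp G (fun i => C i i), Fintype.sum_prod_type]
  simp only [Fin.sum_univ_two]
  rw [Finset.mul_sum]
  exact Finset.sum_congr rfl (fun x _ => by simp [Finset.sum_ite_eq]; ring)

/-- Markov property for `χ = G_n`: for all `2ⁿ × 2ⁿ` matrices `A, B`,
`Trace((A ⊗ I₂)(I₂^{⊗(n−1)} ⊗ R_Q)(B ⊗ I₂)) = Q·Trace(A·B)`; equivalently, with the
normalized traces `Tr_m = 2^{−m}·Trace`,
`Tr_{n+1}((A ⊗ I₂)(I₂^{⊗(n−1)} ⊗ R_Q)(B ⊗ I₂)) = Tr_{n+1}(I₂^{⊗(n−1)} ⊗ R_Q)·Tr_{n+1}((A·B) ⊗ I₂)`. -/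
theorem stmt_18 (n : ℕ) (hn : 2 ≤ n) (Q : ℂ) (hQ : Q ≠ 0) (hQ2 : Q ^ 2 ≠ 1) :
    ∀ A B : Matrix (Fin (2 ^ n)) (Fin (2 ^ n)) ℂ,
      Matrix.trace (kron A (1 : Matrix (Fin 2) (Fin 2) ℂ) * bigTensor n (RQmat Q) *
          kron B (1 : Matrix (Fin 2) (Fin 2) ℂ)) =
        Q * Matrix.trace (A * B) ∧
      ((2 : ℂ) ^ (n + 1))⁻¹ *
          Matrix.trace (kron A (1 : Matrix (Fin 2) (Fin 2) ℂ) * bigTensor n (RQmat Q) *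
            kron B (1 : Matrix (Fin 2) (Fin 2) ℂ)) =
        (((2 : ℂ) ^ (n + 1))⁻¹ * Matrix.trace (bigTensor n (RQmat Q))) *
          (((2 : ℂ) ^ (n + 1))⁻¹ *
            Matrix.trace (kron (A * B) (1 : Matrix (Fin 2) (Fin 2) ℂ))) := by
  obtain ⟨m, rfl⟩ : ∃ m, n = m + 1 := ⟨n - 1, by omega⟩
  intro A B
  have h1 : Matrix.trace (kron A (1 : Matrix (Fin 2) (Fin 2) ℂ) * bigTensor (m+1) (RQmat Q) *
      kron B (1 : Matrix (Fin 2) (Fin 2) ℂ)) = Q * Matrix.trace (A * B) := by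
    rw [Matrix.trace_mul_cycle, kron_mul', Matrix.one_mul, Matrix.trace_mul_comm,
      main_trace, Matrix.trace_mul_comm]
  refine ⟨h1, ?_⟩
  rw [h1]
  have hbt : Matrix.trace (bigTensor (m+1) (RQmat Q)) = 2 ^ m * (2 * Q) := by
    rw [bigTensor_eq, trace_reindex', trace_kron', Matrix.trace_one]
    congr 1
    · simp
    · simp [RQmat, Matrix.trace, Fin.sum_univ_four]; ring
  have hkt : Matrix.trace (kron (A*B) (1 : Matrix (Fin 2) (Fin 2) ℂ))
      = Matrix.trace (A*B) * 2 := by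
    rw [trace_kron', Matrix.trace_one]
    norm_num
  rw [hbt, hkt]
  have h2 : (2:ℂ) ^ (m+1+1) ≠ 0 := pow_ne_zero _ two_ne_zero
  field_simp
  ring_nf
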